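/- Let A be a square matrix with integer entries indexed by a nonempty finite type, and let b be the spectral radius of A, i.e. the maximum of the moduli of the complex roots of the characteristic polynomial of A. Then b is a nonnegative real algebraic integer (integral over ℤ), and every complex root of the minimal polynomial of b over ℚ has modulus at most b. -/

import Mathlib

theorem spectralRadius_int_matrix_condC
    {ι : Type*} [Fintype ι] [DecidableEq ι] [Nonempty ι]
    (A : Matrix ι ι ℤ) (b : ℝ)
    (hb : IsGreatest
      {x : ℝ | ∃ z ∈ (Matrix.charpoly (A.map (fun m => (m : ℂ)))).roots,
        ‖z‖ = x} b) :
    0 ≤ b ∧ IsIntegral ℤ b ∧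
      ∀ z ∈ ((minpoly ℚ b).map (algebraMap ℚ ℂ)).roots, ‖z‖ ≤ b := by
  classical
  set p : Polynomial ℂ := Matrix.charpoly (A.map (fun m => (m : ℂ))) with hp
  have hpmap : p = (Matrix.charpoly A).map (Int.castRingHom ℂ) := by
    rw [hp]
    have : A.map (fun m => (m : ℂ)) = A.map (Int.castRingHom ℂ) := rfl
    rw [this, Matrix.charpoly_map]
  have homeq : (algebraMap ℚ ℂ).comp (Int.castRingHom ℚ) = Int.castRingHom ℂ :=
    RingHom.ext_int _ _
  have toQ : ∀ z : ℂ, Polynomial.eval z p = 0 →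
      Polynomial.aeval z ((Matrix.charpoly A).map (Int.castRingHom ℚ)) = 0 := by
    intro z h1
    rw [hpmap, Polynomial.eval_map] at h1
    rw [Polynomial.aeval_def, Polynomial.eval₂_map, homeq]
    exact h1
  have ofQ : ∀ z : ℂ, Polynomial.aeval z ((Matrix.charpoly A).map (Int.castRingHom ℚ)) = 0 →
      Polynomial.eval z p = 0 := by
    intro z h1
    rw [Polynomial.aeval_def, Polynomial.eval₂_map, homeq] at h1
    rw [hpmap, Polynomial.eval_map]
    exact h1
  obtain ⟨z₀, hz₀mem, hz₀abs⟩ := hb.1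
  have hb0 : 0 ≤ b := hz₀abs ▸ (norm_nonneg z₀)
  have hz₀ev : Polynomial.eval z₀ p = 0 := (Polynomial.mem_roots'.1 hz₀mem).2
  have hz₀root : Polynomial.aeval z₀ ((Matrix.charpoly A).map (Int.castRingHom ℚ)) = 0 :=
    toQ z₀ hz₀ev
  have hz₀int : IsIntegral ℤ z₀ := by
    refine ⟨Matrix.charpoly A, (Matrix.charpoly_monic A), ?_⟩
    have h1 := hz₀ev
    rw [hpmap, Polynomial.eval_map] at h1
    exact h1
  have hconjint : IsIntegral ℤ ((starRingEnd ℂ) z₀) :=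
    hz₀int.map (starRingEnd ℂ).toIntAlgHom
  have hconjev : Polynomial.eval ((starRingEnd ℂ) z₀) p = 0 := by
    rw [hpmap, Polynomial.eval_map]
    rw [hpmap, Polynomial.eval_map] at hz₀ev
    have h2 := Polynomial.hom_eval₂ (Matrix.charpoly A) (Int.castRingHom ℂ)
      (starRingEnd ℂ) z₀
    rw [hz₀ev, map_zero] at h2
    rw [show (starRingEnd ℂ).comp (Int.castRingHom ℂ) = Int.castRingHom ℂ from
      RingHom.ext_int _ _] at h2
    exact h2.symm
  have hconjroot : Polynomial.aeval ((starRingEnd ℂ) z₀)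
      ((Matrix.charpoly A).map (Int.castRingHom ℚ)) = 0 := toQ _ hconjev
  have hmul : z₀ * (starRingEnd ℂ) z₀ = ((b : ℂ)) ^ 2 := by
    rw [Complex.mul_conj, ← hz₀abs, Complex.normSq_eq_norm_sq]
    push_cast
    ring
  have hb2intC : IsIntegral ℤ ((b : ℂ) ^ 2) := by
    rw [← hmul]; exact hz₀int.mul hconjint
  have hb2int : IsIntegral ℤ (b ^ 2) := by
    have heq : algebraMap ℝ ℂ (b ^ 2) = (b : ℂ) ^ 2 := by
      simp [Complex.ofReal_pow]
    rw [← heq] at hb2intC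
    exact (isIntegral_algebraMap_iff (algebraMap ℝ ℂ).injective).1 hb2intC
  have hbint : IsIntegral ℤ b := IsIntegral.of_pow (by norm_num) hb2int
  refine ⟨hb0, hbint, ?_⟩
  intro w hw
  have hbQ : IsIntegral ℚ b := hbint.tower_top
  have hcQ : IsIntegral ℚ ((b : ℂ)) := by
    have h : IsIntegral ℤ ((b : ℂ)) := by
      rw [show ((b : ℂ)) = algebraMap ℝ ℂ b from rfl]
      exact hbint.algebraMap
    exact h.tower_top
  have hz₀Q : IsIntegral ℚ z₀ := hz₀int.tower_top
  have hconjQ : IsIntegral ℚ ((starRingEnd ℂ) z₀) := hconjint.tower_top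
  have hminC : minpoly ℚ ((b : ℂ)) = minpoly ℚ b := by
    have := minpoly.algebraMap_eq (A := ℚ) (B := ℝ) (B' := ℂ)
      (algebraMap ℝ ℂ).injective b
    simpa using this
  have hwroot : Polynomial.aeval w (minpoly ℚ ((b : ℂ))) = 0 := by
    rw [hminC]
    have h := (Polynomial.mem_roots'.1 hw).2
    rwa [Polynomial.IsRoot, Polynomial.eval_map, ← Polynomial.aeval_def] at h
  set S : Set ℂ := {(b : ℂ), z₀, (starRingEnd ℂ) z₀} with hS
  have hcS : ((b : ℂ)) ∈ IntermediateField.adjoin ℚ S :=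
    IntermediateField.subset_adjoin ℚ S (by simp [hS])
  have hzS : z₀ ∈ IntermediateField.adjoin ℚ S :=
    IntermediateField.subset_adjoin ℚ S (by simp [hS])
  have hczS : (starRingEnd ℂ) z₀ ∈ IntermediateField.adjoin ℚ S :=
    IntermediateField.subset_adjoin ℚ S (by simp [hS])
  have hK : ∀ s ∈ S, IsIntegral ℚ s ∧
      ((minpoly ℚ s).map (algebraMap ℚ ℂ)).Splits := by
    intro s hs
    rcases hs with h | h | h
    · exact ⟨h ▸ hcQ, IsAlgClosed.splits _⟩
    · exact ⟨h ▸ hz₀Q, IsAlgClosed.splits _⟩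
    · exact ⟨h ▸ hconjQ, IsAlgClosed.splits _⟩
  obtain ⟨φ, hφ⟩ := IntermediateField.exists_algHom_adjoin_of_splits_of_aeval
    hK hcS hwroot
  have hp0 : p ≠ 0 := (Matrix.charpoly_monic _).ne_zero
  have key : ∀ x : IntermediateField.adjoin ℚ S, Polynomial.aeval (x : ℂ)
      ((Matrix.charpoly A).map (Int.castRingHom ℚ)) = 0 →
      ‖φ x‖ ≤ b := by
    intro x hx
    have hx' : Polynomial.aeval x ((Matrix.charpoly A).map (Int.castRingHom ℚ)) = 0 := by
      apply Subtype.coe_injective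
      have h := Polynomial.aeval_algHom_apply (IntermediateField.adjoin ℚ S).val x
        ((Matrix.charpoly A).map (Int.castRingHom ℚ))
      exact h.symm.trans hx
    have hφx : Polynomial.aeval (φ x) ((Matrix.charpoly A).map (Int.castRingHom ℚ)) = 0 := by
      rw [Polynomial.aeval_algHom_apply φ x]; erw [hx', map_zero]
    have hmem : φ x ∈ p.roots := by
      rw [Polynomial.mem_roots hp0]
      exact ofQ _ hφx
    exact hb.2 ⟨φ x, hmem, rfl⟩
  have hu : ‖φ ⟨z₀, hzS⟩‖ ≤ b := key ⟨z₀, hzS⟩ hz₀root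
  have hv : ‖φ ⟨(starRingEnd ℂ) z₀, hczS⟩‖ ≤ b :=
    key ⟨(starRingEnd ℂ) z₀, hczS⟩ hconjroot
  have hsq : (⟨(b : ℂ), hcS⟩ : IntermediateField.adjoin ℚ S) ^ 2 =
      (⟨z₀, hzS⟩ : IntermediateField.adjoin ℚ S) * ⟨(starRingEnd ℂ) z₀, hczS⟩ := by
    apply Subtype.coe_injective
    push_cast
    exact hmul.symm
  have hw2 : w ^ 2 = φ ⟨z₀, hzS⟩ * φ ⟨(starRingEnd ℂ) z₀, hczS⟩ := by
    rw [← hφ, ← map_mul, ← map_pow]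
    congr 1
  have habs : ‖w‖ ^ 2 ≤ b ^ 2 := by
    calc ‖w‖ ^ 2 = ‖w ^ 2‖ := by rw [norm_pow]
    _ = ‖φ ⟨z₀, hzS⟩‖ * ‖φ ⟨(starRingEnd ℂ) z₀, hczS⟩‖ := by
        rw [hw2, norm_mul]
    _ ≤ b * b := mul_le_mul hu hv (norm_nonneg _) hb0
    _ = b ^ 2 := by ring
  nlinarith [norm_nonneg w]
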